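/- Let $D$ be a triangulated category, $\mathfrak{A}\subset D$ the heart of a bounded $t$-structure, and $(\mathcal{T},\mathcal{F})$ a torsion pair in $\mathfrak{A}$. Then the full subcategory $R_\mathcal{T}\mathfrak{A}=\{E\in D\mid H^i(E)=0 \text{ for } i\notin\{-1,0\},\ H^{-1}(E)\in\mathcal{F},\ H^0(E)\in\mathcal{T}\}$ is the heart of a bounded $t$-structure on $D$. -/

import Mathlib

/-!
STATEMENT 14 (Happel–Reiten–Smalø): Let `D` be a triangulated category, `𝔄` the heart
of a bounded t-structure `t` on `D`, and `(𝒯, 𝓕)` a torsion pair in `𝔄`.  Then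
`R_𝒯𝔄 = {E | Hⁱ(E) = 0 for i ∉ {-1,0}, H⁻¹(E) ∈ 𝓕, H⁰(E) ∈ 𝒯}` is the heart of a
bounded t-structure on `D`.

Membership in `R_𝒯𝔄` is expressed by its standard equivalent characterization:
`E ∈ R_𝒯𝔄` iff there is a distinguished triangle `F₀⟦1⟧ ⟶ E ⟶ T₀ ⟶ F₀⟦2⟧` with
`F₀ ∈ 𝓕` and `T₀ ∈ 𝒯` (then `H⁻¹(E) = F₀`, `H⁰(E) = T₀`).  Likewise short exact
sequences in the heart are expressed as distinguished triangles with all three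
vertices in the heart.
-/

open CategoryTheory CategoryTheory.Limits CategoryTheory.Pretriangulated
  CategoryTheory.Triangulated

universe v u

variable {D : Type u} [Category.{v} D] [Preadditive D] [HasZeroObject D] [HasShift D ℤ]
  [∀ n : ℤ, (shiftFunctor D n).Additive] [Pretriangulated D]

/-- The heart of a t-structure, as a predicate on objects. -/
def heartP (t : TStructure D) : D → Prop := fun X => t.le 0 X ∧ t.ge 0 X

/-- A t-structure is bounded if every object is bounded above and below. -/
def IsBoundedT (t : TStructure D) : Prop := ∀ X : D, ∃ a b : ℤ, t.ge a X ∧ t.le b X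

/-- The tilted heart `R_𝒯𝔄`: objects `E` admitting a distinguished triangle
`F₀⟦1⟧ ⟶ E ⟶ T₀ ⟶ F₀⟦2⟧` with `F₀ ∈ 𝓕`, `T₀ ∈ 𝒯`. -/
def tiltedHeart (T F : D → Prop) : D → Prop := fun E =>
  ∃ (F₀ T₀ : D) (f : F₀⟦(1:ℤ)⟧ ⟶ E) (g : E ⟶ T₀) (h : T₀ ⟶ F₀⟦(1:ℤ)⟧⟦(1:ℤ)⟧),
    F F₀ ∧ T T₀ ∧ Triangle.mk f g h ∈ distTriang D

namespace HRSaux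

set_option linter.unusedSectionVars false

lemma zero_of_iso {X X' Y Y' : D} (e₁ : X ≅ X') (e₂ : Y ≅ Y')
    (h : ∀ g : X ⟶ Y, g = 0) (f : X' ⟶ Y') : f = 0 := by
  have h0 : e₁.hom ≫ f ≫ e₂.inv = 0 := h _
  have h1 : f = e₁.inv ≫ (e₁.hom ≫ f ≫ e₂.inv) ≫ e₂.hom := by simp
  rw [h1, h0, Limits.zero_comp, Limits.comp_zero]

lemma shift_hom_zero {X Y : D} (a : ℤ) (h : ∀ g : X ⟶ Y, g = 0) (f : X⟦a⟧ ⟶ Y⟦a⟧) : f = 0 := by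
  obtain ⟨g, rfl⟩ := (shiftFunctor D a).map_surjective f
  rw [h g, Functor.map_zero]

variable (t : TStructure D)

lemma tzero {X Y : D} {a b : ℤ} (hX : t.le a X) (hY : t.ge b Y) (hab : a < b) (f : X ⟶ Y) :
    f = 0 := by
  have h1 : t.le 0 (X⟦a⟧) := t.le_shift a a 0 (by omega) X hX
  have h2 : t.ge (b - a) (Y⟦a⟧) := t.ge_shift b a (b - a) (by omega) Y hY
  have h3 : t.ge 1 (Y⟦a⟧) := t.ge_antitone (by omega) _ h2
  have h4 : (shiftFunctor D a).map f = 0 := t.zero' _ h1 h3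
  apply (shiftFunctor D a).map_injective
  rw [h4, Functor.map_zero]

lemma leShift {X : D} {m : ℤ} (h : t.le m X) (a k : ℤ) (hk : m - a ≤ k) : t.le k (X⟦a⟧) :=
  t.le_monotone hk _ (t.le_shift m a (m - a) (by omega) X h)

lemma geShift {X : D} {m : ℤ} (h : t.ge m X) (a k : ℤ) (hk : k ≤ m - a) : t.ge k (X⟦a⟧) :=
  t.ge_antitone hk _ (t.ge_shift m a (m - a) (by omega) X h)

lemma homZero₂cov {T : Triangle D} (mem : T ∈ distTriang D) {W : D}
    (h₁ : ∀ g : W ⟶ T.obj₁, g = 0) (h₃ : ∀ g : W ⟶ T.obj₃, g = 0) (f : W ⟶ T.obj₂) :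
    f = 0 := by
  obtain ⟨g, hg⟩ := Triangle.coyoneda_exact₂ T mem f (h₃ _)
  rw [hg, h₁ g, Limits.zero_comp]

lemma homZero₂con {T : Triangle D} (mem : T ∈ distTriang D) {W : D}
    (h₁ : ∀ g : T.obj₁ ⟶ W, g = 0) (h₃ : ∀ g : T.obj₃ ⟶ W, g = 0) (f : T.obj₂ ⟶ W) :
    f = 0 := by
  obtain ⟨g, hg⟩ := Triangle.yoneda_exact₂ T mem f (h₁ _)
  rw [hg, h₃ g, Limits.comp_zero]

lemma homZero₃con {T : Triangle D} (mem : T ∈ distTriang D) {W : D}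
    (h₂ : ∀ g : T.obj₂ ⟶ W, g = 0) (h₁ : ∀ g : T.obj₁⟦(1:ℤ)⟧ ⟶ W, g = 0)
    (f : T.obj₃ ⟶ W) : f = 0 := by
  obtain ⟨g, hg⟩ := Triangle.yoneda_exact₃ T mem f (h₂ _)
  rw [hg, h₁ g, Limits.comp_zero]

lemma le_of_orthogonal {X : D} (n : ℤ)
    (h : ∀ (Z : D), t.ge (n + 1) Z → ∀ f : X ⟶ Z, f = 0) : t.le n X := by
  obtain ⟨X', X'', hX', hX'', f, g, δ, mem⟩ := t.exists_triangle X n (n + 1) rfl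
  obtain ⟨s, hs⟩ := Triangle.yoneda_exact₃ _ mem (𝟙 X'')
    (by show g ≫ 𝟙 X'' = 0; rw [Category.comp_id]; exact h _ hX'' g)
  have hs0 : s = 0 := tzero t (leShift t hX' 1 (n - 1) (by omega)) hX'' (by omega) s
  have hzero : IsZero X'' := by
    rw [IsZero.iff_id_eq_zero, hs, hs0, Limits.comp_zero]
    rfl
  have : IsIso f := (Triangle.isZero₃_iff_isIso₁ _ mem).1 hzero
  exact ObjectProperty.prop_of_iso (t.le n) (asIso f) hX'

lemma ge_of_orthogonal {X : D} (n : ℤ)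
    (h : ∀ (Z : D), t.le (n - 1) Z → ∀ f : Z ⟶ X, f = 0) : t.ge n X := by
  obtain ⟨X', X'', hX', hX'', f, g, δ, mem⟩ := t.exists_triangle X (n - 1) n (by omega)
  obtain ⟨s, hs⟩ := Triangle.coyoneda_exact₂ _ (inv_rot_of_distTriang _ mem) (𝟙 X')
    (by show 𝟙 X' ≫ f = 0; rw [Category.id_comp]; exact h _ hX' f)
  have hs0 : s = 0 := tzero t hX' (geShift t hX'' (-1) (n + 1) (by omega)) (by omega) s
  have hzero : IsZero X' := by
    rw [IsZero.iff_id_eq_zero, hs, hs0, Limits.zero_comp]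
    rfl
  have : IsIso g := (Triangle.isZero₁_iff_isIso₂ _ mem).1 hzero
  exact ObjectProperty.prop_of_iso (t.ge n) (asIso g).symm hX''

variable (T F : D → Prop)

/-- `≤ n` for the tilted t-structure. -/
def LE' (n : ℤ) (X : D) : Prop :=
  t.le n X ∧ ∀ (Y : D) (m : ℤ), m + n = 0 → F Y → ∀ f : X ⟶ Y⟦m⟧, f = 0

/-- `≥ n` for the tilted t-structure. -/
def GE' (n : ℤ) (X : D) : Prop :=
  t.ge (n - 1) X ∧ ∀ (Z : D) (m : ℤ), m + n = 1 → T Z → ∀ f : Z⟦m⟧ ⟶ X, f = 0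

instance (n : ℤ) : ObjectProperty.IsClosedUnderIsomorphisms (LE' t F n) := ⟨fun {X Y} e hX =>
  ⟨ObjectProperty.prop_of_iso (t.le n) e hX.1, fun Y₀ m hm hF₀ f =>
    zero_of_iso e (Iso.refl _) (hX.2 Y₀ m hm hF₀) f⟩⟩

instance (n : ℤ) : ObjectProperty.IsClosedUnderIsomorphisms (GE' t T n) := ⟨fun {X Y} e hX =>
  ⟨ObjectProperty.prop_of_iso (t.ge (n - 1)) e hX.1, fun Z m hm hT₀ f =>
    zero_of_iso (Iso.refl _) e (hX.2 Z m hm hT₀) f⟩⟩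

lemma LE'_shift (n a n' : ℤ) (h : a + n' = n) (X : D) (hX : LE' t F n X) :
    LE' t F n' (X⟦a⟧) := by
  refine ⟨t.le_shift n a n' h X hX.1, fun Y₀ m hm hF₀ f => ?_⟩
  refine zero_of_iso (Iso.refl (X⟦a⟧)) ((shiftFunctorAdd' D (-n) a m (by omega)).symm.app Y₀)
    (fun g => shift_hom_zero a (hX.2 Y₀ (-n) (by omega) hF₀) g) f

lemma GE'_shift (n a n' : ℤ) (h : a + n' = n) (X : D) (hX : GE' t T n X) :
    GE' t T n' (X⟦a⟧) := by
  refine ⟨t.ge_shift (n - 1) a (n' - 1) (by omega) X hX.1, fun Z m hm hT₀ f => ?_⟩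
  refine zero_of_iso ((shiftFunctorAdd' D (1 - n) a m (by omega)).symm.app Z) (Iso.refl (X⟦a⟧))
    (fun g => shift_hom_zero a (hX.2 Z (1 - n) (by omega) hT₀) g) f

section Torsion

variable (hT : ∀ X, T X → heartP t X) (hF : ∀ X, F X → heartP t X)
  (hhom : ∀ (X Y : D) (f : X ⟶ Y), T X → F Y → f = 0)
  (hses : ∀ E, heartP t E → ∃ (A B : D) (f : A ⟶ E) (g : E ⟶ B)
      (h : B ⟶ A⟦(1:ℤ)⟧), T A ∧ F B ∧ Triangle.mk f g h ∈ distTriang D)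

include hT hF hhom hses

lemma tilt_zero {X Y : D} (f : X ⟶ Y) (hX : LE' t F 0 X) (hY : GE' t T 1 Y) : f = 0 := by
  obtain ⟨hXle, hXF⟩ := hX
  obtain ⟨hYge', hYT⟩ := hY
  have hYge : t.ge 0 Y := by rw [show (1:ℤ) - 1 = 0 by norm_num] at hYge'; exact hYge'
  have hXF' : ∀ (F₁ : D), F F₁ → ∀ g : X ⟶ F₁, g = 0 := fun F₁ hF₁ g =>
    zero_of_iso (Iso.refl X) ((shiftFunctorZero D ℤ).app F₁)
      (fun g' => hXF F₁ 0 (by omega) hF₁ g') g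
  have hYT' : ∀ (T₁ : D), T T₁ → ∀ g : T₁ ⟶ Y, g = 0 := fun T₁ hT₁ g =>
    zero_of_iso ((shiftFunctorZero D ℤ).app T₁) (Iso.refl Y)
      (fun g' => hYT T₁ 0 (by omega) hT₁ g') g
  obtain ⟨X₁, X₀, hX₁, hX₀ge, u, v, δ, mem⟩ := t.exists_triangle X (-1) 0 (by omega)
  have hX₀le : t.le 0 X₀ := le_of_orthogonal t 0 (fun Z hZ g => homZero₃con mem
    (fun g' => tzero t hXle hZ (by omega) g')
    (fun g' => tzero t (leShift t hX₁ 1 (-2) (by omega)) hZ (by omega) g') g)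
  have hX₀F : ∀ F₁, F F₁ → ∀ g : X₀ ⟶ F₁, g = 0 := fun F₁ hF₁ g => homZero₃con mem
    (hXF' F₁ hF₁)
    (fun g' => tzero t (leShift t hX₁ 1 (-2) (by omega)) (hF F₁ hF₁).2 (by omega) g') g
  obtain ⟨TA, FB, i, q, r, hTA, hFB, memH⟩ := hses X₀ ⟨hX₀le, hX₀ge⟩
  obtain ⟨f₀, hf₀⟩ := Triangle.yoneda_exact₂ _ mem f (tzero t hX₁ hYge (by omega) (u ≫ f))
  obtain ⟨f₁, hf₁⟩ := Triangle.yoneda_exact₂ _ memH f₀ (hYT' TA hTA (i ≫ f₀))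
  have hq : q = 0 := hX₀F FB hFB q
  rw [hf₀, hf₁]
  change FB ⟶ Y at f₁
  show v ≫ q ≫ f₁ = 0
  rw [hq, Limits.zero_comp, Limits.comp_zero]

lemma tilt_exists_triangle (A : D) :
    ∃ (X Y : D) (_ : LE' t F 0 X) (_ : GE' t T 1 Y)
      (f : X ⟶ A) (g : A ⟶ Y) (h : Y ⟶ X⟦(1 : ℤ)⟧), Triangle.mk f g h ∈ distTriang D := by
  obtain ⟨A', A'', hA'le, hA''ge, a₁, a₂, a₃, memA⟩ := t.exists_triangle A 0 1 (by omega)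
  obtain ⟨B', H, hB'le, hHge, b₁, p, δ, memB⟩ := t.exists_triangle A' (-1) 0 (by omega)
  have hHle : t.le 0 H := le_of_orthogonal t 0 (fun Z hZ g => homZero₃con memB
    (fun g' => tzero t hA'le hZ (by omega) g')
    (fun g' => tzero t (leShift t hB'le 1 (-2) (by omega)) hZ (by omega) g') g)
  obtain ⟨T₀, F₀, i, q, r, hT₀, hF₀, memH⟩ := hses H ⟨hHle, hHge⟩
  obtain ⟨X, x₁, π, memX⟩ := distinguished_cocone_triangle₂ (i ≫ δ)
  obtain ⟨φ, hφ₁, hφ₂⟩ := complete_distinguished_triangle_morphism₂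
    (Triangle.mk x₁ π (i ≫ δ)) (Triangle.mk b₁ p δ) memX memB (𝟙 B') i
    (by show (i ≫ δ) ≫ (shiftFunctor D (1:ℤ)).map (𝟙 B') = i ≫ δ; simp)
  change X ⟶ A' at φ
  change x₁ ≫ φ = 𝟙 B' ≫ b₁ at hφ₁
  change π ≫ i = φ ≫ p at hφ₂
  rw [Category.id_comp] at hφ₁
  obtain ⟨Y, y₂, y₃, memY⟩ := distinguished_cocone_triangle (φ ≫ a₁)
  have hXle : t.le 0 X := le_of_orthogonal t 0 (fun Z hZ g => homZero₂con memX
    (fun g' => tzero t hB'le hZ (by omega) g')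
    (fun g' => tzero t (hT T₀ hT₀).1 hZ (by omega) g') g)
  have hXF : ∀ (Y₀ : D), F Y₀ → ∀ g : X ⟶ Y₀, g = 0 := fun Y₀ hY₀ g => homZero₂con memX
    (fun g' => tzero t hB'le (hF Y₀ hY₀).2 (by omega) g')
    (fun g' => hhom _ _ g' hT₀ hY₀) g
  -- basic composition-zero facts
  have hpδ : p ≫ δ = 0 := comp_distTriang_mor_zero₂₃ _ memB
  have hεx : (i ≫ δ) ≫ (shiftFunctor D (1:ℤ)).map x₁ = 0 := comp_distTriang_mor_zero₃₁ _ memX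
  have hwy : (φ ≫ a₁) ≫ y₂ = 0 := comp_distTriang_mor_zero₁₂ _ memY
  -- Claim 1: maps to A' factor through φ
  have claim1 : ∀ {W : D}, (∀ γ : W ⟶ H, ∃ s : W ⟶ T₀, γ = s ≫ i) →
      ∀ g' : W ⟶ A', ∃ x : W ⟶ X, g' = x ≫ φ := by
    intro W hWH g'
    obtain ⟨s, hs⟩ := hWH (g' ≫ p)
    obtain ⟨x₀, hx₀⟩ := Triangle.coyoneda_exact₃ _ memX s (by
      show s ≫ i ≫ δ = 0
      rw [← Category.assoc, ← hs, Category.assoc, hpδ, Limits.comp_zero])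
    change W ⟶ X at x₀
    change s = x₀ ≫ π at hx₀
    obtain ⟨β, hβ⟩ := Triangle.coyoneda_exact₂ _ memB (g' - x₀ ≫ φ) (by
      show (g' - x₀ ≫ φ) ≫ p = 0
      rw [Preadditive.sub_comp, Category.assoc, ← hφ₂, ← Category.assoc, ← hx₀, ← hs, sub_self])
    change W ⟶ B' at β
    change g' - x₀ ≫ φ = β ≫ b₁ at hβ
    refine ⟨x₀ + β ≫ x₁, ?_⟩
    rw [Preadditive.add_comp, Category.assoc, hφ₁, ← hβ]
    abel
  -- Claim 2: maps to X⟦1⟧ killed by φ⟦1⟧ vanish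
  have claim2 : ∀ {W : D}, (∀ γ : W ⟶ H, ∃ s : W ⟶ T₀, γ = s ≫ i) →
      (∀ γ : W ⟶ F₀, γ = 0) →
      ∀ ξ : W ⟶ X⟦(1:ℤ)⟧, ξ ≫ (shiftFunctor D (1:ℤ)).map φ = 0 → ξ = 0 := by
    intro W hWH hWF ξ hξφ
    have h1 : (ξ ≫ (shiftFunctor D (1:ℤ)).map π) ≫ (shiftFunctor D (1:ℤ)).map i = 0 := by
      rw [Category.assoc, ← Functor.map_comp, hφ₂, Functor.map_comp, ← Category.assoc, hξφ,
        Limits.zero_comp]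
    obtain ⟨g, hg⟩ := Triangle.coyoneda_exact₃ _ (rot_of_distTriang _ memH)
      (ξ ≫ (shiftFunctor D (1:ℤ)).map π) (by
        show (ξ ≫ (shiftFunctor D (1:ℤ)).map π) ≫ (-(shiftFunctor D (1:ℤ)).map i) = 0
        rw [Preadditive.comp_neg, h1, neg_zero])
    change W ⟶ F₀ at g
    change ξ ≫ (shiftFunctor D (1:ℤ)).map π = g ≫ r at hg
    have h2 : ξ ≫ (shiftFunctor D (1:ℤ)).map π = 0 := by
      rw [hg, hWF g, Limits.zero_comp]
    obtain ⟨g₂, hg₂⟩ := Triangle.coyoneda_exact₃ _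
      (rot_of_distTriang _ (rot_of_distTriang _ memX)) ξ (by
        show ξ ≫ (-(shiftFunctor D (1:ℤ)).map π) = 0
        rw [Preadditive.comp_neg, h2, neg_zero])
    change W ⟶ B'⟦(1:ℤ)⟧ at g₂
    change ξ = g₂ ≫ (-(shiftFunctor D (1:ℤ)).map x₁) at hg₂
    have h3 : g₂ ≫ (shiftFunctor D (1:ℤ)).map b₁ = 0 := by
      have h' := hξφ
      rw [hg₂] at h'
      simp only [Preadditive.neg_comp, Preadditive.comp_neg, Category.assoc,
        ← Functor.map_comp, hφ₁, neg_eq_zero] at h'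
      exact h'
    obtain ⟨γ, hγ⟩ := Triangle.coyoneda_exact₂ _
      (rot_of_distTriang _ (rot_of_distTriang _ memB)) g₂ (by
        show g₂ ≫ (-(shiftFunctor D (1:ℤ)).map b₁) = 0
        rw [Preadditive.comp_neg, h3, neg_zero])
    change W ⟶ H at γ
    change g₂ = γ ≫ δ at hγ
    obtain ⟨s, hsγ⟩ := hWH γ
    have h5 : i ≫ δ ≫ (shiftFunctor D (1:ℤ)).map x₁ = 0 := by
      rw [← Category.assoc]; exact hεx
    rw [hg₂, hγ, hsγ]
    simp only [Preadditive.comp_neg, neg_eq_zero, Category.assoc]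
    rw [h5, Limits.comp_zero]
  -- Claim 3: maps to Y vanish
  have claim3 : ∀ {W : D}, (∀ γ : W ⟶ H, ∃ s : W ⟶ T₀, γ = s ≫ i) →
      (∀ γ : W ⟶ F₀, γ = 0) → (∀ γ : W ⟶ A'', γ = 0) →
      ∀ f : W ⟶ Y, f = 0 := by
    intro W hWH hWF hWA f
    have h31 : y₃ ≫ (shiftFunctor D (1:ℤ)).map (φ ≫ a₁) = 0 :=
      comp_distTriang_mor_zero₃₁ _ memY
    have hξw : ((f ≫ y₃) ≫ (shiftFunctor D (1:ℤ)).map φ) ≫ (shiftFunctor D (1:ℤ)).map a₁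
        = 0 := by
      rw [Category.assoc, Category.assoc, ← Functor.map_comp, h31, Limits.comp_zero]
    have hξφ : (f ≫ y₃) ≫ (shiftFunctor D (1:ℤ)).map φ = 0 := by
      obtain ⟨g, hg⟩ := Triangle.coyoneda_exact₁ _ memA
        ((f ≫ y₃) ≫ (shiftFunctor D (1:ℤ)).map φ) (by exact hξw)
      change W ⟶ A'' at g
      change (f ≫ y₃) ≫ (shiftFunctor D (1:ℤ)).map φ = g ≫ a₃ at hg
      rw [hg, hWA g, Limits.zero_comp]
    have hξ : f ≫ y₃ = 0 := claim2 hWH hWF _ hξφ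
    obtain ⟨g, hg⟩ := Triangle.coyoneda_exact₃ _ memY f hξ
    change W ⟶ A at g
    change f = g ≫ y₂ at hg
    obtain ⟨g', hg'⟩ := Triangle.coyoneda_exact₂ _ memA g (hWA _)
    change W ⟶ A' at g'
    change g = g' ≫ a₁ at hg'
    obtain ⟨x, hx⟩ := claim1 hWH g'
    have h5 : φ ≫ a₁ ≫ y₂ = 0 := by rw [← Category.assoc]; exact hwy
    rw [hg, hg', hx, Category.assoc, Category.assoc, h5, Limits.comp_zero]
  -- instantiate
  have caseLow : ∀ (Z : D), t.le (0 - 1) Z → ∀ f : Z ⟶ Y, f = 0 := fun Z hZ f =>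
    claim3 (fun γ => ⟨0, by simp [tzero t hZ hHge (by omega) γ]⟩)
      (fun γ => tzero t hZ (hF F₀ hF₀).2 (by omega) γ)
      (fun γ => tzero t hZ hA''ge (by omega) γ) f
  have caseT : ∀ (T₁ : D), T T₁ → ∀ f : T₁ ⟶ Y, f = 0 := fun T₁ hT₁ f =>
    claim3 (fun γ => Triangle.coyoneda_exact₂ _ memH γ (hhom _ _ (γ ≫ q) hT₁ hF₀))
      (fun γ => hhom _ _ γ hT₁ hF₀)
      (fun γ => tzero t (hT T₁ hT₁).1 hA''ge (by omega) γ) f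
  have hYge : t.ge 0 Y := ge_of_orthogonal t 0 caseLow
  refine ⟨X, Y, ⟨hXle, fun Y₀ m hm hY₀ f => ?_⟩,
    ⟨by rw [show (1:ℤ) - 1 = 0 by norm_num]; exact hYge, fun Z m hm hTZ f => ?_⟩,
    φ ≫ a₁, y₂, y₃, memY⟩
  · obtain rfl : m = 0 := by omega
    exact zero_of_iso (Iso.refl X) ((shiftFunctorZero D ℤ).app Y₀).symm (hXF Y₀ hY₀) f
  · obtain rfl : m = 0 := by omega
    exact zero_of_iso ((shiftFunctorZero D ℤ).app Z).symm (Iso.refl Y) (caseT Z hTZ) f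

end Torsion

section Tor2

variable (hT : ∀ X, T X → heartP t X) (hF : ∀ X, F X → heartP t X)
  (hhom : ∀ (X Y : D) (f : X ⟶ Y), T X → F Y → f = 0)
  (hses : ∀ E, heartP t E → ∃ (A B : D) (f : A ⟶ E) (g : E ⟶ B)
      (h : B ⟶ A⟦(1:ℤ)⟧), T A ∧ F B ∧ Triangle.mk f g h ∈ distTriang D)

/-- The tilted t-structure. -/
def tilt : TStructure D where
  le := LE' t F
  ge := GE' t T
  le_isClosedUnderIsomorphisms := inferInstance
  ge_isClosedUnderIsomorphisms := inferInstance
  le_shift := LE'_shift t F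
  ge_shift := GE'_shift t T
  zero' := fun {X Y} f hX hY => tilt_zero t T F hT hF hhom hses f hX hY
  le_zero_le := fun X hX => ⟨t.le_monotone (by omega) _ hX.1, fun Y₀ m hm hF₀ f =>
    tzero t hX.1 (geShift t (hF Y₀ hF₀).2 m 1 (by omega)) (by omega) f⟩
  ge_one_le := fun X hX => ⟨t.ge_antitone (by omega) _ hX.1, fun Z m hm hTZ f =>
    tzero t (leShift t (hT Z hTZ).1 m (-1) (by omega))
      (by have h0 := hX.1; rwa [show (1:ℤ) - 1 = 0 by norm_num] at h0) (by omega) f⟩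
  exists_triangle_zero_one := tilt_exists_triangle t T F hT hF hhom hses

include hT hF hhom hses

lemma tilted_to_heart (E : D) (h : tiltedHeart T F E) : LE' t F 0 E ∧ GE' t T 0 E := by
  obtain ⟨F₀, T₀, f, g, h, hF₀, hT₀, memT⟩ := h
  have hF₀h := hF F₀ hF₀
  have hT₀h := hT T₀ hT₀
  refine ⟨⟨?_, ?_⟩, ⟨?_, ?_⟩⟩
  · exact le_of_orthogonal t 0 (fun Z hZ g' => homZero₂con memT
      (fun g'' => tzero t (leShift t hF₀h.1 1 (-1) (by omega)) hZ (by omega) g'')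
      (fun g'' => tzero t hT₀h.1 hZ (by omega) g'') g')
  · intro Y₀ m hm hY₀ f'
    obtain rfl : m = 0 := by omega
    refine zero_of_iso (Iso.refl E) ((shiftFunctorZero D ℤ).app Y₀).symm
      (fun g' => homZero₂con memT
        (fun g'' => tzero t (leShift t hF₀h.1 1 (-1) (by omega)) (hF Y₀ hY₀).2 (by omega) g'')
        (fun g'' => hhom _ _ g'' hT₀ hY₀) g') f'
  · exact ge_of_orthogonal t (0 - 1) (fun Z hZ g' => homZero₂cov memT
      (fun g'' => tzero t hZ (geShift t hF₀h.2 1 (-1) (by omega)) (by omega) g'')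
      (fun g'' => tzero t hZ hT₀h.2 (by omega) g'') g')
  · intro Z m hm hTZ f'
    obtain rfl : m = 1 := by omega
    exact homZero₂cov memT
      (fun g'' => shift_hom_zero 1 (fun g₀ => hhom _ _ g₀ hTZ hF₀) g'')
      (fun g'' => tzero t (leShift t (hT Z hTZ).1 1 (-1) (by omega)) hT₀h.2 (by omega) g'') f'

lemma heart_to_tilted (E : D) (h1 : LE' t F 0 E) (h2 : GE' t T 0 E) : tiltedHeart T F E := by
  obtain ⟨hEle, hEF⟩ := h1
  obtain ⟨hEge', hET⟩ := h2
  have hEF' : ∀ (F₁ : D), F F₁ → ∀ g : E ⟶ F₁, g = 0 := fun F₁ hF₁ g =>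
    zero_of_iso (Iso.refl E) ((shiftFunctorZero D ℤ).app F₁)
      (fun g' => hEF F₁ 0 (by omega) hF₁ g') g
  obtain ⟨E', E'', hE'le, hE''ge, u, v, w, memE⟩ := t.exists_triangle E (-1) 0 (by omega)
  -- E'' is in the heart
  have hE''le : t.le 0 E'' := le_of_orthogonal t 0 (fun Z hZ g => homZero₃con memE
    (fun g' => tzero t hEle hZ (by omega) g')
    (fun g' => tzero t (leShift t hE'le 1 (-2) (by omega)) hZ (by omega) g') g)
  -- E' is ≥ -1
  have hE'ge : t.ge (-1) E' := ge_of_orthogonal t (-1) (fun Z hZ g => by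
    obtain ⟨g', hg'⟩ := Triangle.coyoneda_exact₂ _ (inv_rot_of_distTriang _ memE) g
      (by exact tzero t hZ hEge' (by omega) _)
    rw [hg', tzero t hZ (geShift t hE''ge (-1) 1 (by omega)) (by omega) g']; exact Limits.zero_comp)
  -- Hom(E'', 𝓕) = 0
  have hE''F : ∀ (F₁ : D), F F₁ → ∀ g : E'' ⟶ F₁, g = 0 := fun F₁ hF₁ g => homZero₃con memE
    (hEF' F₁ hF₁)
    (fun g' => tzero t (leShift t hE'le 1 (-2) (by omega)) (hF F₁ hF₁).2 (by omega) g') g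
  -- torsion decomposition of E''
  obtain ⟨T₀, FB, i₂, g₂, h₂, hT₀, hFB, memE''⟩ := hses E'' ⟨hE''le, hE''ge⟩
  have hg₂ : g₂ = 0 := hE''F FB hFB g₂
  obtain ⟨s, hs⟩ := Triangle.yoneda_exact₃ _ memE'' (𝟙 FB)
    (by show g₂ ≫ 𝟙 FB = 0; rw [Category.comp_id]; exact hg₂)
  have hs0 : s = 0 := tzero t (leShift t (hT T₀ hT₀).1 1 (-1) (by omega)) (hF FB hFB).2
    (by omega) s
  have hFBzero : IsZero FB := by
    rw [IsZero.iff_id_eq_zero, hs, hs0, Limits.comp_zero]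
    rfl
  have hiso₂ : IsIso i₂ := (Triangle.isZero₃_iff_isIso₁ _ memE'').1 hFBzero
  have χ : T₀ ≅ E'' := asIso i₂
  -- M = E'⟦-1⟧ is in the heart and Hom(𝒯, M) = 0
  have hMle : t.le 0 (E'⟦(-1:ℤ)⟧) := leShift t hE'le (-1) 0 (by omega)
  have hMge : t.ge 0 (E'⟦(-1:ℤ)⟧) := geShift t hE'ge (-1) 0 (by omega)
  have hMT : ∀ (T₁ : D), T T₁ → ∀ g : T₁ ⟶ E'⟦(-1:ℤ)⟧, g = 0 := by
    intro T₁ hT₁ g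
    have e := (shiftFunctorCompIsoId D (-1:ℤ) (1:ℤ) (by omega)).app E'
    -- e : E'⟦-1⟧⟦1⟧ ≅ E'
    have hg1 : (shiftFunctor D (1:ℤ)).map g ≫ e.hom = 0 := by
      obtain ⟨g', hg'⟩ := Triangle.coyoneda_exact₂ _ (inv_rot_of_distTriang _ memE)
        ((shiftFunctor D (1:ℤ)).map g ≫ e.hom)
        (by dsimp; exact hET T₁ 1 (by omega) hT₁ _)
      dsimp at hg'
      refine hg'.trans ?_
      rw [tzero t (leShift t (hT T₁ hT₁).1 1 (-1) (by omega))
        (geShift t hE''ge (-1) 1 (by omega)) (by omega) g']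
      exact Limits.zero_comp
    have hg2 : (shiftFunctor D (1:ℤ)).map g = 0 := by
      have : (shiftFunctor D (1:ℤ)).map g = ((shiftFunctor D (1:ℤ)).map g ≫ e.hom) ≫ e.inv := by
        simp
      rw [this, hg1, Limits.zero_comp]
    apply (shiftFunctor D (1:ℤ)).map_injective
    rw [hg2, Functor.map_zero]
  -- torsion decomposition of M
  obtain ⟨TA, F₀, i₃, q₃, r₃, hTA, hF₀, memM⟩ := hses (E'⟦(-1:ℤ)⟧) ⟨hMle, hMge⟩
  have hi₃ : i₃ = 0 := hMT TA hTA i₃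
  obtain ⟨s₂, hs₂⟩ := Triangle.coyoneda_exact₂ _ (inv_rot_of_distTriang _ memM) (𝟙 TA)
    (by show 𝟙 TA ≫ i₃ = 0; rw [Category.id_comp]; exact hi₃)
  have hs₂0 : s₂ = 0 := tzero t (hT TA hTA).1 (geShift t (hF F₀ hF₀).2 (-1) 1 (by omega))
    (by omega) s₂
  have hTAzero : IsZero TA := by
    rw [IsZero.iff_id_eq_zero, hs₂, hs₂0, Limits.zero_comp]
    rfl
  have hiso₃ : IsIso q₃ := (Triangle.isZero₁_iff_isIso₂ _ memM).1 hTAzero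
  have β : E'⟦(-1:ℤ)⟧ ≅ F₀ := asIso q₃
  have ψ : E' ≅ F₀⟦(1:ℤ)⟧ :=
    ((shiftFunctorCompIsoId D (-1:ℤ) (1:ℤ) (by omega)).app E').symm ≪≫
      (shiftFunctor D (1:ℤ)).mapIso β
  refine ⟨F₀, T₀, ψ.inv ≫ u, v ≫ χ.inv, χ.hom ≫ w ≫ (shiftFunctor D (1:ℤ)).map ψ.hom,
    hF₀, hT₀, ?_⟩
  refine isomorphic_distinguished _ memE _ (Triangle.isoMk _ _ ψ.symm (Iso.refl E) χ ?_ ?_ ?_)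
  · show (ψ.inv ≫ u) ≫ 𝟙 E = ψ.inv ≫ u; simp
  · show (v ≫ χ.inv) ≫ χ.hom = 𝟙 E ≫ v; simp
  · show (χ.hom ≫ w ≫ (shiftFunctor D (1:ℤ)).map ψ.hom) ≫ (shiftFunctor D (1:ℤ)).map ψ.inv =
      χ.hom ≫ w
    simp only [Category.assoc, ← Functor.map_comp, Iso.hom_inv_id, Functor.map_id,
      Category.comp_id]
    rw [CategoryTheory.Functor.map_id, Category.comp_id]

end Tor2

end HRSaux

theorem happel_reiten_smalo_tilting
    (t : TStructure D) (hbounded : IsBoundedT t)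
    (T F : D → Prop)
    -- `(𝒯, 𝓕)` is a torsion pair in the heart `𝔄` of `t`:
    (hT : ∀ X, T X → heartP t X) (hF : ∀ X, F X → heartP t X)
    (hhom : ∀ (X Y : D) (f : X ⟶ Y), T X → F Y → f = 0)
    (hses : ∀ E, heartP t E → ∃ (A B : D) (f : A ⟶ E) (g : E ⟶ B)
      (h : B ⟶ A⟦(1:ℤ)⟧), T A ∧ F B ∧ Triangle.mk f g h ∈ distTriang D) :
    -- the tilted subcategory is the heart of a bounded t-structure:
    ∃ t' : TStructure D, IsBoundedT t' ∧
      ∀ X : D, heartP t' X ↔ tiltedHeart T F X := by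
  refine ⟨HRSaux.tilt t T F hT hF hhom hses, ?_, ?_⟩
  · intro X
    obtain ⟨a, b, hGa, hLb⟩ := hbounded X
    refine ⟨a, b + 1, ⟨t.ge_antitone (by omega) _ hGa, ?_⟩,
      ⟨t.le_monotone (by omega) _ hLb, ?_⟩⟩
    · intro Z m hm hTZ f
      exact HRSaux.tzero t (HRSaux.leShift t (hT Z hTZ).1 m (a - 1) (by omega)) hGa
        (by omega) f
    · intro Y₀ m hm hY₀ f
      exact HRSaux.tzero t hLb (HRSaux.geShift t (hF Y₀ hY₀).2 m (b + 1) (by omega))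
        (by omega) f
  · intro X
    constructor
    · intro h
      exact HRSaux.heart_to_tilted t T F hT hF hhom hses X h.1 h.2
    · intro h
      obtain ⟨h1, h2⟩ := HRSaux.tilted_to_heart t T F hT hF hhom hses X h
      exact ⟨h1, h2⟩
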